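/- Let a, b ∈ (0,1] with a + b > 1, let x, y ∈ ℝ and δ ≥ 0, and suppose |a·x + (1−a)·y| ≤ a·b·δ and a·x² + (1−a)·y² ≤ a·b·δ. Then a·x ≤ 2·a·b·√δ (indeed a·|x| ≤ a·b·(δ + √δ) ≤ 2·a·b·√δ when δ ≤ 1). -/
import Mathlib


set_option maxHeartbeats 1000000 in
/-- From a first-moment and a second-moment bound, deduce `a·x ≤ 2·a·b·√δ`. -/
theorem first_second_moment_bound (a b x y δ : ℝ)
    (ha : 0 < a) (ha1 : a ≤ 1) (hb : 0 < b) (hb1 : b ≤ 1)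
    (hab : 1 < a + b) (hδ0 : 0 ≤ δ) (hδ1 : δ ≤ 1)
    (h1 : |a * x + (1 - a) * y| ≤ a * b * δ)
    (h2 : a * x ^ 2 + (1 - a) * y ^ 2 ≤ a * b * δ) :
    a * x ≤ 2 * a * b * Real.sqrt δ := by
  have hs0 : 0 ≤ Real.sqrt δ := Real.sqrt_nonneg δ
  have hsq : Real.sqrt δ ^ 2 = δ := Real.sq_sqrt hδ0
  have hs1 : Real.sqrt δ ≤ 1 := Real.sqrt_le_one.mpr hδ1
  set s := Real.sqrt δ with hs
  clear_value s
  have hδs : δ ≤ s := by nlinarith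
  obtain ⟨h1l, h1r⟩ := abs_le.mp h1
  have habnn : 0 ≤ a * b := (mul_pos ha hb).le
  have hab1 : a * b ≤ 1 := by nlinarith
  have hc0 : (0:ℝ) ≤ a * b * δ := by positivity
  have hc1 : a * b * δ ≤ 1 := by nlinarith
  have hδsab : a * b * δ ≤ a * b * s := mul_le_mul_of_nonneg_left hδs habnn
  have hsq2 : (a * b * s) ^ 2 = a * b * (a * b * δ) := by
    rw [mul_pow, mul_pow, hsq]; ring
  obtain ⟨c, hcdef⟩ : ∃ c : ℝ, a * b * δ = c := ⟨_, rfl⟩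
  rw [hcdef] at h1l h1r h2 hc0 hc1 hδsab hsq2
  rcases le_or_gt (a * x) c with ht | ht
  · linarith
  · rcases eq_or_lt_of_le ha1 with h1a | h1a
    · exfalso
      rw [← h1a] at h1r
      nlinarith
    · have ha' : (0:ℝ) < 1 - a := by linarith
      have hu : (1 - a) * y ≤ c - a * x := by linarith
      have hu0 : (1 - a) * y < 0 := by linarith
      have husq : (a * x - c) ^ 2 ≤ ((1 - a) * y) ^ 2 := by nlinarith
      have hmul := mul_le_mul_of_nonneg_left h2 (le_of_lt (mul_pos ha ha'))
      have key : (1 - a) * (a * x) ^ 2 + a * ((1 - a) * y) ^ 2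
          ≤ a * (1 - a) * c := by nlinarith [hmul]
      have h1ab : 1 - a ≤ b := by linarith
      have husqa := mul_le_mul_of_nonneg_left husq ha.le
      have e1 : (a * x - a * c) ^ 2 ≤ a * c * (1 - a) * (1 - c) := by
        linarith [key, husqa]
      have e2 : a * c * (1 - a) * (1 - c) ≤ a * b * c := by
        linarith [mul_nonneg (mul_nonneg (mul_nonneg ha.le hc0) ha'.le) hc0,
          mul_nonneg (mul_nonneg ha.le hc0) (by linarith : (0:ℝ) ≤ b - (1 - a))]
      have hq : (a * x - a * c) ^ 2 ≤ (a * b * s) ^ 2 := by linarith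
      have habs : 0 ≤ a * b * s := by positivity
      have htle : a * x - a * c ≤ a * b * s := by nlinarith [hq]
      have hfin : a * c ≤ c := by nlinarith [mul_nonneg ha'.le hc0]
      linarith
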